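/- Let α(z) = (z₀+z₄)² − (z₂+z₃)² and G(z) = (z₀α(z) − z₁²(z₀+z₄), z₁²(z₂+z₃), z₄α(z), z₂α(z), z₃α(z)) on ℂ⁵. If α(z) = 0, then G(z) = z₁²(z₂+z₃)·(±1, 1, 0, 0, 0) (the sign determined by z₀+z₄ = ±(z₂+z₃)), and consequently G(G(z)) = (0,0,0,0,0). -/

import Mathlib

/-- The Grigorchuk map `G` on `ℂ⁵`. -/
def grigG (z : ℂ × ℂ × ℂ × ℂ × ℂ) : ℂ × ℂ × ℂ × ℂ × ℂ :=
  let α := (z.1 + z.2.2.2.2) ^ 2 - (z.2.2.1 + z.2.2.2.1) ^ 2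
  (z.1 * α - z.2.1 ^ 2 * (z.1 + z.2.2.2.2), z.2.1 ^ 2 * (z.2.2.1 + z.2.2.2.1),
    z.2.2.2.2 * α, z.2.2.1 * α, z.2.2.2.1 * α)

/-- If `α(z) = 0` then `G(z) = z₁²(z₂+z₃)·(±1,1,0,0,0)` and `G(G(z)) = 0`. -/
theorem stmt_16 (z0 z1 z2 z3 z4 : ℂ)
    (hα : (z0 + z4) ^ 2 - (z2 + z3) ^ 2 = 0) :
    (grigG (z0, z1, z2, z3, z4) = (z1 ^ 2 * (z2 + z3), z1 ^ 2 * (z2 + z3), 0, 0, 0)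
      ∨ grigG (z0, z1, z2, z3, z4)
          = (-(z1 ^ 2 * (z2 + z3)), z1 ^ 2 * (z2 + z3), 0, 0, 0))
    ∧ grigG (grigG (z0, z1, z2, z3, z4)) = (0, 0, 0, 0, 0) := by
  have h : (z0 + z4 - (z2 + z3)) * (z0 + z4 + (z2 + z3)) = 0 := by linear_combination hα
  rcases mul_eq_zero.mp h with h1 | h1
  · have hz4 : z4 = z2 + z3 - z0 := by linear_combination h1
    subst hz4
    refine ⟨Or.inr ?_, ?_⟩ <;> simp only [grigG, Prod.mk.injEq] <;>
      refine ⟨by ring, by simp, by ring, by ring, by ring⟩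
  · have hz4 : z4 = -(z2 + z3) - z0 := by linear_combination h1
    subst hz4
    refine ⟨Or.inl ?_, ?_⟩ <;> simp only [grigG, Prod.mk.injEq] <;>
      refine ⟨by ring, by simp <;> right <;> ring, by ring, by ring, by ring⟩
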